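/- arXiv:2412.03119 — 6 statements merged into one kernel-verified Lean document; each statement's English description precedes it below -/
import Mathlib

section
/- For all real x with |x| < 1 and integer n ≥ 0, the series ∑_{j=0}^∞ (j+1)_{n,λ} x^j converges, and (1-x)^{n+1} · ∑_{j=0}^∞ (j+1)_{n,λ} x^j is a polynomial in x of degree at most n (this polynomial is the degenerate Eulerian polynomial A_{n,λ}(x)). -/
open Finset PowerSeries

/-- Degenerate falling factorial `(x)_{n,λ} = x(x-λ)⋯(x-(n-1)λ)`. -/
noncomputable def dfall (l x : ℝ) (n : ℕ) : ℝ := ∏ i ∈ Finset.range n, (x - i * l)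

/-- Degenerate Eulerian number `A_λ(n,k) = ∑_{i=0}^k C(n+1,i)(-1)^i (k-i+1)_{n,λ}`. -/
noncomputable def degEulerianNum (l : ℝ) (n k : ℕ) : ℝ :=
  ∑ i ∈ Finset.range (k+1), ((n+1).choose i : ℝ) * (-1)^i * dfall l ((k : ℝ) - i + 1) n

/-- Degenerate Eulerian polynomial `A_{n,λ}(x) = ∑_{k=0}^n A_λ(n,k) x^k`. -/
noncomputable def degEulerianPoly (l : ℝ) (n : ℕ) (x : ℝ) : ℝ :=
  ∑ k ∈ Finset.range (n+1), degEulerianNum l n k * x^k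

/-- Generalized binomial coefficient `binom(y,m) = y(y-1)⋯(y-m+1)/m!`. -/
noncomputable def genBinom (y : ℝ) (m : ℕ) : ℝ :=
  (∏ i ∈ Finset.range m, (y - i)) / m.factorial

/-- Degenerate exponential `e_λ^x(t) = ∑_k (x)_{k,λ} t^k/k!` as a formal power series. -/
noncomputable def degExp (l x : ℝ) : PowerSeries ℝ :=
  PowerSeries.mk fun k => dfall l x k / k.factorial

/-- Degenerate Stirling number of the second kind (explicit formula). -/
noncomputable def degStirling2 (l : ℝ) (n k : ℕ) : ℝ :=
  (-1)^k / k.factorial * ∑ j ∈ Finset.range (k+1), (-1)^j * (k.choose j : ℝ) * dfall l j n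

namespace Stmt0Aux

open Polynomial

/-- Backward shift of a sequence (with 0 prepended). -/
def shiftSeq (a : ℕ → ℝ) : ℕ → ℝ
  | 0 => 0
  | j+1 => a j

/-- Backward difference operator on sequences. -/
def Dop (a : ℕ → ℝ) : ℕ → ℝ := fun j => a j - shiftSeq a j

lemma step (a : ℕ → ℝ) (x : ℝ) (h : Summable fun j => a j * x ^ j) :
    Summable (fun j => Dop a j * x ^ j) ∧
      (1 - x) * ∑' j, a j * x ^ j = ∑' j, Dop a j * x ^ j := by
  have hg1 : (fun n => shiftSeq a (n + 1) * x ^ (n + 1)) = fun n => x * (a n * x ^ n) := by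
    funext n; simp only [shiftSeq]; ring
  have hg : Summable fun j => shiftSeq a j * x ^ j := by
    rw [← summable_nat_add_iff 1]
    simpa only [hg1] using h.mul_left x
  have hfun : (fun j => Dop a j * x ^ j) = fun j => a j * x ^ j - shiftSeq a j * x ^ j := by
    funext j; simp [Dop, sub_mul]
  refine ⟨by rw [hfun]; exact h.sub hg, ?_⟩
  have hgt : ∑' j, shiftSeq a j * x ^ j = x * ∑' j, a j * x ^ j := by
    rw [Summable.tsum_eq_zero_add hg]
    simp only [hg1]
    rw [tsum_mul_left]
    simp [shiftSeq]
  rw [hfun, Summable.tsum_sub h hg, hgt]; ring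

lemma step_iter (m : ℕ) (a : ℕ → ℝ) (x : ℝ) (h : Summable fun j => a j * x ^ j) :
    Summable (fun j => Dop^[m] a j * x ^ j) ∧
      (1 - x) ^ m * ∑' j, a j * x ^ j = ∑' j, Dop^[m] a j * x ^ j := by
  induction m generalizing a with
  | zero => simpa using h
  | succ m ih =>
    obtain ⟨hs, he⟩ := step a x h
    obtain ⟨hs2, he2⟩ := ih (Dop a) hs
    rw [Function.iterate_succ_apply]
    exact ⟨hs2, by rw [pow_succ, mul_comm ((1-x)^m) (1-x), mul_assoc, mul_left_comm, he, he2]⟩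

lemma deg_diff (Q : Polynomial ℝ) (d : ℕ) (h : Q.natDegree ≤ d + 1) :
    (Q - Q.comp (Polynomial.X - Polynomial.C 1)).natDegree ≤ d := by
  by_cases hQ : Q = 0
  · simp [hQ]
  have hm : (Polynomial.X - Polynomial.C (1:ℝ)).Monic := monic_X_sub_C 1
  have hcl : (Q.comp (Polynomial.X - Polynomial.C 1)).leadingCoeff = Q.leadingCoeff := by
    rw [leadingCoeff_comp (by rw [natDegree_X_sub_C]; exact one_ne_zero), hm.leadingCoeff,
      one_pow, mul_one]
  have hcne : Q.comp (Polynomial.X - Polynomial.C 1) ≠ 0 := by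
    intro h0
    exact hQ (leadingCoeff_eq_zero.mp (by rw [← hcl, h0, leadingCoeff_zero]))
  have hdeg : (Q.comp (Polynomial.X - Polynomial.C 1)).degree = Q.degree := by
    rw [degree_eq_natDegree hcne, degree_eq_natDegree hQ, natDegree_comp,
      natDegree_X_sub_C, mul_one]
  have hlt : (Q - Q.comp (Polynomial.X - Polynomial.C 1)).degree < Q.degree :=
    degree_sub_lt hdeg.symm hQ hcl.symm
  by_cases hz : Q - Q.comp (Polynomial.X - Polynomial.C 1) = 0
  · rw [hz]; simp
  have := natDegree_lt_natDegree hz hlt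
  omega

lemma Dop_eval (Q : Polynomial ℝ) (a : ℕ → ℝ) (J : ℕ)
    (hQ : ∀ j, J ≤ j → a j = Q.eval (j:ℝ)) :
    ∀ j, J + 1 ≤ j → Dop a j = (Q - Q.comp (Polynomial.X - Polynomial.C 1)).eval (j:ℝ) := by
  intro j hj
  obtain ⟨k, rfl⟩ : ∃ k, j = k + 1 := ⟨j - 1, by omega⟩
  have h1 : a (k+1) = Q.eval ((k:ℝ)+1) := by rw [hQ _ (by omega)]; push_cast; ring_nf
  have h2 : a k = Q.eval (k:ℝ) := hQ _ (by omega)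
  simp only [Dop, shiftSeq, h1, h2, eval_sub, eval_comp, eval_X, eval_C]
  push_cast; ring_nf

lemma vanish (n : ℕ) (Q : Polynomial ℝ) (hd : Q.natDegree ≤ n) (a : ℕ → ℝ) (J : ℕ)
    (hQ : ∀ j, J ≤ j → a j = Q.eval (j:ℝ)) :
    ∀ j, J + n + 1 ≤ j → Dop^[n+1] a j = 0 := by
  induction n generalizing Q a J with
  | zero =>
    intro j hj
    have hc : Q = Polynomial.C (Q.coeff 0) := Polynomial.eq_C_of_natDegree_le_zero hd
    have := Dop_eval Q a J hQ j (by omega)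
    rw [Function.iterate_one, this, hc]
    simp
  | succ n ih =>
    intro j hj
    have hR : (Q - Q.comp (Polynomial.X - Polynomial.C 1)).natDegree ≤ n := deg_diff Q n hd
    have := ih _ hR (Dop a) (J+1) (Dop_eval Q a J hQ) j (by omega)
    rwa [Function.iterate_succ_apply]

end Stmt0Aux

open Polynomial Stmt0Aux in
/-- for `|x|<1`, the series `∑_j (j+1)_{n,λ} x^j` converges and
`(1-x)^{n+1}` times its sum is (the value at `x` of) a polynomial of degree at most `n`. -/
theorem stmt0 (l : ℝ) (n : ℕ) :
    ∃ p : Polynomial ℝ, p.natDegree ≤ n ∧ ∀ x : ℝ, |x| < 1 →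
      Summable (fun j : ℕ => dfall l ((j : ℝ) + 1) n * x ^ j) ∧
      (1 - x) ^ (n + 1) * (∑' j : ℕ, dfall l ((j : ℝ) + 1) n * x ^ j) = p.eval x := by
  set a : ℕ → ℝ := fun j => dfall l ((j : ℝ) + 1) n with ha
  set Q : Polynomial ℝ := ∏ i ∈ Finset.range n, (Polynomial.X + Polynomial.C (1 - (i:ℝ) * l)) with hQdef
  have hQeval : ∀ j : ℕ, a j = Q.eval (j:ℝ) := by
    intro j
    simp only [ha, hQdef, dfall, eval_prod, eval_add, eval_X, eval_C]
    exact Finset.prod_congr rfl fun i _ => by ring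
  have hQdeg : Q.natDegree ≤ n := by
    have h1 : ∀ i ∈ range n, (Polynomial.X + Polynomial.C (1 - (i:ℝ) * l)).natDegree ≤ 1 :=
      fun i _ => (natDegree_X_add_C _).le
    refine le_trans (natDegree_prod_le _ _) (le_trans (Finset.sum_le_sum h1) (by simp))
  have hbz : ∀ j, n + 1 ≤ j → Dop^[n+1] a j = 0 := fun j hj =>
    vanish n Q hQdeg a 0 (fun j _ => hQeval j) j (by omega)
  refine ⟨∑ j ∈ Finset.range (n+1), Polynomial.C (Dop^[n+1] a j) * Polynomial.X ^ j, ?_, ?_⟩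
  · refine natDegree_sum_le_of_forall_le _ _ fun j hj => ?_
    refine le_trans (natDegree_C_mul_le _ _) ?_
    simpa using Nat.lt_succ_iff.mp (Finset.mem_range.mp hj)
  · intro x hx
    have hsum : Summable fun j : ℕ => a j * x ^ j := by
      have heq : (fun j : ℕ => a j * x ^ j)
          = fun j : ℕ => ∑ i ∈ range (Q.natDegree + 1), Q.coeff i * ((j:ℝ) ^ i * x ^ j) := by
        funext j
        rw [hQeval j, eval_eq_sum_range, Finset.sum_mul]
        exact Finset.sum_congr rfl fun i _ => by ring
      rw [heq]
      exact summable_sum fun i _ =>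
        ((summable_pow_mul_geometric_of_norm_lt_one i (by rwa [Real.norm_eq_abs])).mul_left
          (Q.coeff i))
    obtain ⟨hs, he⟩ := step_iter (n+1) a x hsum
    refine ⟨hsum, ?_⟩
    rw [he, tsum_eq_sum (s := Finset.range (n+1))
      (fun j hj => by rw [hbz j (by simpa using hj)]; ring), eval_finset_sum]
    exact Finset.sum_congr rfl fun j _ => by rw [eval_mul, eval_C, eval_pow, eval_X]
end

section
/- The exponential generating function of the degenerate Eulerian polynomials is (x-1)/(x - e_{-λ}((x-1)t)), i.e., (x-1)/(x - e_{-λ}((x-1)t)) = ∑_{n=0}^∞ A_{n,λ}(x) t^n/n! as formal power series in t (for appropriate x, t). -/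
open Finset PowerSeries

section Aux

open Polynomial

lemma dfall_zero' (l x : ℝ) : dfall l x 0 = 1 := by simp [dfall]

lemma dfall_succ (l x : ℝ) (n : ℕ) : dfall l x (n+1) = dfall l x n * (x - n * l) := by
  simp [dfall, Finset.prod_range_succ]

lemma dfall_zero_arg (l : ℝ) {n : ℕ} (hn : 1 ≤ n) : dfall l 0 n = 0 := by
  apply Finset.prod_eq_zero (Finset.mem_range.mpr hn : 0 ∈ Finset.range n)
  simp

lemma dfall_neg_one (l : ℝ) (k : ℕ) : dfall l (-1) k = (-1)^k * dfall (-l) 1 k := by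
  rw [dfall, dfall]
  have h : ∀ i ∈ range k, (-1 : ℝ) - i*l = (-1) * (1 - i * (-l)) := fun i _ => by ring
  rw [Finset.prod_congr rfl h, Finset.prod_mul_distrib, Finset.prod_const, Finset.card_range]

lemma fd (N : ℕ) : ∀ (Q : Polynomial ℝ), Q.degree < (N : WithBot ℕ) → ∀ z : ℝ,
    ∑ i ∈ range (N+1), ((N.choose i : ℝ)) * (-1)^i * Q.eval (z - i) = 0 := by
  induction N with
  | zero =>
    intro Q hQ z
    have : Q = 0 := by
      rw [← Polynomial.degree_eq_bot, ← Nat.WithBot.lt_zero_iff]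
      exact_mod_cast hQ
    simp [this]
  | succ N IH =>
    intro Q hQ z
    set Q' : Polynomial ℝ := Q - Q.comp (Polynomial.X - Polynomial.C 1) with hQ'def
    have hdeg' : Q'.degree < (N : WithBot ℕ) := by
      rcases eq_or_ne Q' 0 with h | hne
      · rw [h, degree_zero]; exact bot_lt_iff_ne_bot.mpr (by simp)
      rcases le_or_gt Q.degree 0 with hle | hlt
      · exfalso; apply hne
        have hcomp : Q.comp (Polynomial.X - Polynomial.C 1) = Q := by
          rw [Polynomial.eq_C_of_degree_le_zero hle, C_comp]
        rw [hQ'def, hcomp, sub_self]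
      · have h0 : Q ≠ 0 := fun h => by simp [h] at hlt
        have hlc : (Q.comp (Polynomial.X - Polynomial.C 1)).leadingCoeff = Q.leadingCoeff := by
          rw [leadingCoeff_comp (by rw [natDegree_X_sub_C]; norm_num)]
          rw [leadingCoeff_X_sub_C, one_pow, mul_one]
        have hcompdeg : (Q.comp (Polynomial.X - Polynomial.C 1)).degree = Q.degree := by
          have hne2 : Q.comp (Polynomial.X - Polynomial.C 1) ≠ 0 := by
            intro h
            exact h0 (leadingCoeff_eq_zero.mp (by rw [← hlc, h, leadingCoeff_zero]))
          rw [degree_eq_natDegree hne2, degree_eq_natDegree h0, natDegree_comp,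
            natDegree_X_sub_C, mul_one]
        have hlt2 := Polynomial.degree_sub_lt hcompdeg.symm h0 hlc.symm
        rw [← hQ'def] at hlt2
        rw [← natDegree_lt_iff_degree_lt hne]
        have h1 : Q'.natDegree < Q.natDegree := by
          rwa [natDegree_lt_iff_degree_lt hne, ← degree_eq_natDegree h0]
        have h2 : Q.natDegree < N + 1 := by rwa [natDegree_lt_iff_degree_lt h0]
        omega
    have key := IH Q' hdeg' z
    -- expand Q' eval
    have heval : ∀ w : ℝ, Q'.eval w = Q.eval w - Q.eval (w - 1) := by
      intro w; simp [hQ'def, eval_comp]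
    calc ∑ i ∈ range (N+2), ((N+1).choose i : ℝ) * (-1)^i * Q.eval (z - i)
        = (∑ i ∈ range (N+1), ((N+1).choose (i+1) : ℝ) * (-1)^(i+1) * Q.eval (z - (i+1)))
          + ((N+1).choose 0 : ℝ) * (-1)^0 * Q.eval (z - (0:ℕ)) := by
          rw [Finset.sum_range_succ' (fun i => ((N+1).choose i : ℝ) * (-1)^i * Q.eval (z - i)) (N+1)]
          push_cast; ring_nf
      _ = ∑ i ∈ range (N+1), ((N.choose i : ℝ)) * (-1)^i * Q'.eval (z - i) := by
          have hsplit : ∑ i ∈ range (N+1), ((N+1).choose (i+1) : ℝ) * (-1)^(i+1) * Q.eval (z - ((i:ℝ)+1))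
              = (∑ i ∈ range (N+1), -((N.choose i : ℝ) * (-1)^i * Q.eval (z - i - 1)))
                + ∑ i ∈ range (N+1), (N.choose (i+1) : ℝ) * (-1)^(i+1) * Q.eval (z - ((i:ℝ)+1)) := by
            rw [← Finset.sum_add_distrib]
            apply Finset.sum_congr rfl
            intro i _
            have hc : (((N+1).choose (i+1)) : ℝ) = N.choose i + N.choose (i+1) := by
              rw [Nat.choose_succ_succ]; push_cast; ring
            rw [hc]; ring
          have h2 : (∑ i ∈ range (N+1), (N.choose (i+1) : ℝ) * (-1)^(i+1) * Q.eval (z - ((i:ℝ)+1)))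
              + ((N+1).choose 0 : ℝ) * (-1)^0 * Q.eval (z - ((0:ℕ):ℝ))
              = ∑ i ∈ range (N+2), (N.choose i : ℝ) * (-1)^i * Q.eval (z - i) := by
            rw [Finset.sum_range_succ' (fun i => (N.choose i : ℝ) * (-1)^i * Q.eval (z - i)) (N+1)]
            push_cast
            norm_num
          have h3 : ∑ i ∈ range (N+2), (N.choose i : ℝ) * (-1)^i * Q.eval (z - i)
              = ∑ i ∈ range (N+1), (N.choose i : ℝ) * (-1)^i * Q.eval (z - i) := by
            rw [Finset.sum_range_succ, Nat.choose_succ_self]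
            norm_num
          rw [hsplit, add_assoc, h2, h3]
          rw [← Finset.sum_add_distrib]
          apply Finset.sum_congr rfl
          intro i _
          rw [heval]
          ring_nf
      _ = 0 := key
lemma vdm (l : ℝ) (n : ℕ) : ∀ y z : ℝ,
    dfall l (y + z) n = ∑ k ∈ range (n+1), (n.choose k : ℝ) * dfall l y k * dfall l z (n-k) := by
  induction n with
  | zero => intro y z; simp [dfall]
  | succ n IH =>
    intro y z
    have step : ∀ k, k ∈ range (n+1) →
        ((n+1).choose (k+1) : ℝ) * dfall l y (k+1) * dfall l z (n+1-(k+1))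
          = (n.choose k : ℝ) * (dfall l y k * (y - k*l)) * dfall l z (n-k)
            + (n.choose (k+1) : ℝ) * dfall l y (k+1) * dfall l z (n-k) := by
      intro k _
      have hc : (((n+1).choose (k+1)) : ℝ) = n.choose k + n.choose (k+1) := by
        rw [Nat.choose_succ_succ]; push_cast; ring
      rw [hc, Nat.succ_sub_succ, dfall_succ]
      ring
    calc dfall l (y + z) (n+1)
        = (∑ k ∈ range (n+1), (n.choose k : ℝ) * dfall l y k * dfall l z (n-k)) * (y + z - n*l) := by
          rw [dfall_succ, IH]
      _ = ∑ k ∈ range (n+1), (n.choose k : ℝ) * dfall l y k * dfall l z (n-k) * ((y - k*l) + (z - (n-k : ℕ)*l)) := by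
          rw [Finset.sum_mul]
          apply Finset.sum_congr rfl
          intro k hk
          have hk' : k ≤ n := Nat.lt_succ_iff.mp (mem_range.mp hk)
          have : ((n - k : ℕ) : ℝ) = (n:ℝ) - k := by
            push_cast [hk']; ring
          rw [this]; ring
      _ = ∑ k ∈ range (n+1), ((n.choose k : ℝ) * (dfall l y k * (y - k*l)) * dfall l z (n-k)
            + (n.choose k : ℝ) * dfall l y k * (dfall l z (n-k) * (z - (n-k : ℕ)*l))) := by
          apply Finset.sum_congr rfl; intro k _; ring
      _ = ∑ k ∈ range (n+1), ((n.choose k : ℝ) * (dfall l y k * (y - k*l)) * dfall l z (n-k))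
            + ∑ k ∈ range (n+1), (n.choose k : ℝ) * dfall l y k * dfall l z (n-k+1) := by
          rw [Finset.sum_add_distrib]
          congr 1
          apply Finset.sum_congr rfl; intro k _
          rw [dfall_succ]
      _ = ∑ k ∈ range (n+2), ((n+1).choose k : ℝ) * dfall l y k * dfall l z (n+1-k) := by
          set g : ℕ → ℝ := fun k => (n.choose k : ℝ) * dfall l y k * dfall l z (n+1-k) with hg
          have e1 : ∑ k ∈ range (n+2), ((n+1).choose k : ℝ) * dfall l y k * dfall l z (n+1-k)
              = (∑ k ∈ range (n+1), ((n+1).choose (k+1) : ℝ) * dfall l y (k+1) * dfall l z (n+1-(k+1)))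
                + ((n+1).choose 0 : ℝ) * dfall l y 0 * dfall l z (n+1) := by
            exact Finset.sum_range_succ' _ (n+1)
          have e2 : ∑ k ∈ range (n+1), ((n+1).choose (k+1) : ℝ) * dfall l y (k+1) * dfall l z (n+1-(k+1))
              = (∑ k ∈ range (n+1), (n.choose k : ℝ) * (dfall l y k * (y - k*l)) * dfall l z (n-k))
                + ∑ k ∈ range (n+1), (n.choose (k+1) : ℝ) * dfall l y (k+1) * dfall l z (n-k) := by
            rw [← Finset.sum_add_distrib]
            exact Finset.sum_congr rfl step
          have e3 : ∑ k ∈ range (n+2), g k = (∑ k ∈ range (n+1), g (k+1)) + g 0 :=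
            Finset.sum_range_succ' g (n+1)
          have e4 : ∑ k ∈ range (n+2), g k = ∑ k ∈ range (n+1), g k := by
            rw [Finset.sum_range_succ]
            simp [hg, Nat.choose_succ_self]
          have e5 : ∑ k ∈ range (n+1), (n.choose k : ℝ) * dfall l y k * dfall l z (n-k+1)
              = ∑ k ∈ range (n+1), g k := by
            apply Finset.sum_congr rfl
            intro k hk
            have hk' : k ≤ n := Nat.lt_succ_iff.mp (mem_range.mp hk)
            have : n - k + 1 = n + 1 - k := by omega
            rw [hg, this]
          have e6 : ∀ k, g (k+1) = (n.choose (k+1) : ℝ) * dfall l y (k+1) * dfall l z (n-k) := by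
            intro k
            rw [hg]
            simp only [Nat.succ_sub_succ]
          have e7 : g 0 = ((n+1).choose 0 : ℝ) * dfall l y 0 * dfall l z (n+1) := by
            simp [hg]
          rw [e1, e2, e5, ← e4, e3]
          simp only [e6, e7]
          ring

lemma expand_dfall (l : ℝ) (n : ℕ) (w : ℝ) :
    dfall l w n = ∑ k ∈ range (n+1),
      (n.choose k : ℝ) * ((-1)^k * dfall (-l) 1 k) * dfall l (w+1) (n-k) := by
  have := vdm l n (-1) (w+1)
  have h0 : (-1 : ℝ) + (w+1) = w := by ring
  rw [h0] at this
  rw [this]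
  apply Finset.sum_congr rfl
  intro k _
  rw [dfall_neg_one]

end Aux

section Series

lemma one_sub_X_pow (N : ℕ) :
    ((1 : ℝ⟦X⟧) - PowerSeries.X)^N
      = ∑ j ∈ range (N+1), PowerSeries.C ((-1)^j * (N.choose j : ℝ)) * PowerSeries.X^j := by
  rw [sub_pow, ← Finset.sum_range_reflect]
  apply Finset.sum_congr rfl
  intro m hm
  have hm' : m ≤ N := Nat.lt_succ_iff.mp (mem_range.mp hm)
  have h1 : N + 1 - 1 - m = N - m := by omega
  rw [h1]
  have hC : N.choose (N - m) = N.choose m := Nat.choose_symm hm'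
  have h2 : N - (N - m) = m := by omega
  have hsgn : ((-1 : ℝ⟦X⟧))^(N-m+N) = (-1)^m := by
    have h3 : N - m + N = 2*(N-m) + m := by omega
    rw [h3, pow_add, pow_mul]
    norm_num
  have hCmap : PowerSeries.C ((-1)^m * (N.choose m : ℝ))
      = ((-1 : ℝ⟦X⟧))^m * ((N.choose m : ℕ) : ℝ⟦X⟧) := by
    rw [map_mul]; push_cast; simp
  rw [hC, h2, hsgn, hCmap]
  ring

lemma coeff_osp (N i : ℕ) :
    PowerSeries.coeff i ((1 - PowerSeries.X)^N) = (-1)^i * (N.choose i : ℝ) := by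
  rw [one_sub_X_pow, map_sum]
  simp only [PowerSeries.coeff_C_mul, PowerSeries.coeff_X_pow, mul_ite, mul_one, mul_zero]
  rw [Finset.sum_ite_eq (range (N+1)) i (fun j => (-1)^j * (N.choose j : ℝ))]
  by_cases h : i ∈ range (N+1)
  · simp [h]
  · simp only [h, if_false]
    have : N.choose i = 0 := Nat.choose_eq_zero_of_lt (by simpa using h)
    simp [this]


noncomputable def Ppoly (l : ℝ) (n : ℕ) : Polynomial ℝ :=
  ∑ k ∈ range (n+1), Polynomial.C (degEulerianNum l n k) * Polynomial.X^k

noncomputable def Fser (l : ℝ) (n : ℕ) : ℝ⟦X⟧ :=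
  PowerSeries.mk fun j => dfall l ((j:ℝ)+1) n

noncomputable def Qpoly (l : ℝ) (n : ℕ) : Polynomial ℝ :=
  ∏ i ∈ range n, (Polynomial.X + Polynomial.C (1 - i*l))

lemma Qpoly_eval (l : ℝ) (n : ℕ) (w : ℝ) : (Qpoly l n).eval w = dfall l (w+1) n := by
  rw [Qpoly, dfall, Polynomial.eval_prod]
  apply Finset.prod_congr rfl
  intro i _
  simp
  ring

lemma Qpoly_deg (l : ℝ) (n : ℕ) : (Qpoly l n).degree < ((n+1 : ℕ) : WithBot ℕ) := by
  have h1 : (Qpoly l n).natDegree ≤ n := by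
    apply le_trans (Polynomial.natDegree_prod_le _ _)
    apply le_trans (Finset.sum_le_card_nsmul _ _ 1 ?_)
    · simp
    · intro i _
      exact le_of_eq (Polynomial.natDegree_X_add_C _)
  calc (Qpoly l n).degree ≤ ((Qpoly l n).natDegree : WithBot ℕ) := Polynomial.degree_le_natDegree
    _ ≤ (n : WithBot ℕ) := by exact_mod_cast h1
    _ < ((n+1 : ℕ) : WithBot ℕ) := by exact_mod_cast Nat.lt_succ_self n

lemma Ppoly_eval (l : ℝ) (n : ℕ) (x : ℝ) : (Ppoly l n).eval x = degEulerianPoly l n x := by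
  rw [Ppoly, degEulerianPoly, Polynomial.eval_finset_sum]
  apply Finset.sum_congr rfl
  intro k _
  simp

lemma Ppoly_coeff (l : ℝ) (n m : ℕ) :
    (Ppoly l n).coeff m = if m ∈ range (n+1) then degEulerianNum l n m else 0 := by
  rw [Ppoly, Polynomial.finset_sum_coeff]
  simp only [Polynomial.coeff_C_mul, Polynomial.coeff_X_pow, mul_ite, mul_one, mul_zero]
  rw [Finset.sum_ite_eq (range (n+1)) m (fun k => degEulerianNum l n k)]

lemma A_eq (l : ℝ) (n : ℕ) :
    ((Ppoly l n : Polynomial ℝ) : ℝ⟦X⟧) = (1 - PowerSeries.X)^(n+1) * Fser l n := by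
  ext m
  rw [Polynomial.coeff_coe, PowerSeries.coeff_mul, Finset.Nat.sum_antidiagonal_eq_sum_range_succ_mk]
  simp only [coeff_osp, Fser, PowerSeries.coeff_mk]
  rw [Ppoly_coeff]
  by_cases hm : m ∈ range (n+1)
  · rw [if_pos hm]
    have hm' : m ≤ n := Nat.lt_succ_iff.mp (mem_range.mp hm)
    rw [degEulerianNum]
    apply Finset.sum_congr rfl
    intro i hi
    have hi' : i ≤ m := Nat.lt_succ_iff.mp (mem_range.mp hi)
    have hc : ((m - i : ℕ) : ℝ) = (m:ℝ) - i := by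
      push_cast [hi']; ring
    rw [hc]
    ring
  · rw [if_neg hm]
    have hm' : n + 1 ≤ m := Nat.le_of_not_lt (fun h => hm (mem_range.mpr h))
    have hsub : range (n+2) ⊆ range (m+1) := by
      apply Finset.range_subset_range.mpr; omega
    rw [← Finset.sum_subset hsub ?h2]
    case h2 =>
      intro i _ hi2
      have : n + 1 < i := by
        have := Finset.mem_range.not.mp hi2
        omega
      rw [Nat.choose_eq_zero_of_lt this]
      simp
    have hfd := fd (n+1) (Qpoly l n) (Qpoly_deg l n) (m : ℝ)
    rw [← hfd]
    apply Finset.sum_congr rfl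
    intro i hi
    have hi' : i ≤ n + 1 := Nat.lt_succ_iff.mp (mem_range.mp hi)
    have hc : ((m - i : ℕ) : ℝ) = (m:ℝ) - i := by
      push_cast [le_trans hi' hm']; ring
    rw [hc, Qpoly_eval]
    ring

end Series

section Key

lemma XF (l : ℝ) (n : ℕ) (hn : 1 ≤ n) :
    PowerSeries.X * Fser l n
      = ∑ k ∈ range (n+1),
          PowerSeries.C ((n.choose k : ℝ) * ((-1)^k * dfall (-l) 1 k)) * Fser l (n-k) := by
  ext j
  rw [map_sum]
  simp only [PowerSeries.coeff_C_mul, Fser, PowerSeries.coeff_mk]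
  cases j with
  | zero =>
    rw [PowerSeries.coeff_zero_X_mul]
    have h := expand_dfall l n 0
    rw [dfall_zero_arg l hn] at h
    simp only [Nat.cast_zero]
    exact h
  | succ j =>
    rw [PowerSeries.coeff_succ_X_mul, PowerSeries.coeff_mk]
    rw [expand_dfall l n ((j:ℝ)+1)]
    apply Finset.sum_congr rfl
    intro k _
    push_cast
    ring_nf

lemma neg_one_pow_C (k : ℕ) : ((-1 : ℝ⟦X⟧))^k = PowerSeries.C ((-1)^k) := by
  rw [map_pow, map_neg, map_one]

lemma key2poly (l : ℝ) (n : ℕ) (hn : 1 ≤ n) :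
    Polynomial.X * Ppoly l n
      = ∑ k ∈ range (n+1),
          Polynomial.C ((n.choose k : ℝ) * dfall (-l) 1 k)
            * (Polynomial.X - 1)^k * Ppoly l (n-k) := by
  apply Polynomial.coe_injective
  show ((Polynomial.X * Ppoly l n : Polynomial ℝ) : ℝ⟦X⟧)
      = ((∑ k ∈ range (n+1),
          Polynomial.C ((n.choose k : ℝ) * dfall (-l) 1 k)
            * (Polynomial.X - 1)^k * Ppoly l (n-k) : Polynomial ℝ) : ℝ⟦X⟧)
  rw [Polynomial.coe_mul, Polynomial.coe_X, A_eq]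
  have hsum : ((∑ k ∈ range (n+1),
        Polynomial.C ((n.choose k : ℝ) * dfall (-l) 1 k)
          * (Polynomial.X - 1)^k * Ppoly l (n-k) : Polynomial ℝ) : ℝ⟦X⟧)
      = ∑ k ∈ range (n+1),
          PowerSeries.C ((n.choose k : ℝ) * dfall (-l) 1 k)
            * (PowerSeries.X - 1)^k * ((Ppoly l (n-k) : Polynomial ℝ) : ℝ⟦X⟧) := by
    rw [← Polynomial.coeToPowerSeries.ringHom_apply, map_sum]
    apply Finset.sum_congr rfl
    intro k _
    simp only [map_mul, map_pow, map_sub, map_one]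
    simp [Polynomial.coeToPowerSeries.ringHom_apply]
  rw [hsum]
  have hterm : ∀ k ∈ range (n+1),
      PowerSeries.C ((n.choose k : ℝ) * dfall (-l) 1 k)
          * (PowerSeries.X - 1)^k * ((Ppoly l (n-k) : Polynomial ℝ) : ℝ⟦X⟧)
        = (1 - PowerSeries.X)^(n+1)
            * (PowerSeries.C ((n.choose k : ℝ) * ((-1)^k * dfall (-l) 1 k)) * Fser l (n-k)) := by
    intro k hk
    have hk' : k ≤ n := Nat.lt_succ_iff.mp (mem_range.mp hk)
    rw [A_eq]
    have h1 : ((PowerSeries.X : ℝ⟦X⟧) - 1)^k = (-1)^k * (1 - PowerSeries.X)^k := by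
      rw [← neg_sub (1 : ℝ⟦X⟧) PowerSeries.X, neg_pow]
    have h2 : ((1:ℝ⟦X⟧) - PowerSeries.X)^k * (1 - PowerSeries.X)^(n-k+1) = (1 - PowerSeries.X)^(n+1) := by
      rw [← pow_add]
      congr 1
      omega
    have h3 : PowerSeries.C ((n.choose k : ℝ) * ((-1)^k * dfall (-l) 1 k))
        = PowerSeries.C ((n.choose k : ℝ) * dfall (-l) 1 k) * (-1)^k := by
      rw [neg_one_pow_C, ← map_mul]
      congr 1
      ring
    rw [h1, h3, ← h2]
    ring
  rw [Finset.sum_congr rfl hterm, ← Finset.mul_sum, ← XF l n hn]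
  ring

lemma key2 (l x : ℝ) (n : ℕ) (hn : 1 ≤ n) :
    x * degEulerianPoly l n x
      = ∑ k ∈ range (n+1),
          (n.choose k : ℝ) * dfall (-l) 1 k * (x-1)^k * degEulerianPoly l (n-k) x := by
  have h := congrArg (Polynomial.eval x) (key2poly l n hn)
  rw [Polynomial.eval_mul, Polynomial.eval_X, Ppoly_eval, Polynomial.eval_finset_sum] at h
  rw [h]
  apply Finset.sum_congr rfl
  intro k _
  rw [Polynomial.eval_mul, Polynomial.eval_mul, Polynomial.eval_C, Polynomial.eval_pow,
    Polynomial.eval_sub, Polynomial.eval_X, Polynomial.eval_one, Ppoly_eval]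

end Key

lemma E0 (l x : ℝ) : degEulerianPoly l 0 x = 1 := by
  simp [degEulerianPoly, degEulerianNum, dfall]

/-- `(x-1) = (x - e_{-λ}((x-1)t)) · ∑_n A_{n,λ}(x) t^n/n!` as formal
power series in `t`, i.e. the EGF of the degenerate Eulerian polynomials is
`(x-1)/(x - e_{-λ}((x-1)t))`. -/
theorem stmt1 (l x : ℝ) :
    (PowerSeries.C (x - 1)) =
      (PowerSeries.C x - PowerSeries.rescale (x - 1) (degExp (-l) 1)) *
        PowerSeries.mk (fun n => degEulerianPoly l n x / n.factorial) := by
  ext n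
  rw [PowerSeries.coeff_mul, Finset.Nat.sum_antidiagonal_eq_sum_range_succ_mk,
    PowerSeries.coeff_C]
  have hco : ∀ i : ℕ, PowerSeries.coeff i (PowerSeries.C x - PowerSeries.rescale (x - 1) (degExp (-l) 1))
      = (if i = 0 then x else 0) - (x-1)^i * (dfall (-l) 1 i / i.factorial) := by
    intro i
    rw [map_sub, PowerSeries.coeff_C, PowerSeries.coeff_rescale, degExp, PowerSeries.coeff_mk]
  simp only [hco, PowerSeries.coeff_mk]
  have hsplit : ∑ i ∈ range (n+1),
        ((if i = 0 then x else 0) - (x-1)^i * (dfall (-l) 1 i / i.factorial))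
          * (degEulerianPoly l (n-i) x / (n-i).factorial)
      = (∑ i ∈ range (n+1), (if i = 0 then x else 0) * (degEulerianPoly l (n-i) x / (n-i).factorial))
        - ∑ i ∈ range (n+1), (x-1)^i * (dfall (-l) 1 i / i.factorial)
            * (degEulerianPoly l (n-i) x / (n-i).factorial) := by
    rw [← Finset.sum_sub_distrib]
    apply Finset.sum_congr rfl
    intro i _
    ring
  rw [hsplit]
  have h1 : ∑ i ∈ range (n+1), (if i = 0 then x else 0) * (degEulerianPoly l (n-i) x / (n-i).factorial)
      = x * (degEulerianPoly l n x / n.factorial) := by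
    rw [Finset.sum_eq_single 0]
    · simp
    · intro b _ hb; rw [if_neg hb, zero_mul]
    · intro h; exact absurd (Finset.mem_range.mpr (Nat.succ_pos n)) h
  rw [h1]
  cases n with
  | zero =>
    simp [E0, dfall]
  | succ m =>
    rw [if_neg (Nat.succ_ne_zero m)]
    have hk2 := key2 l x (m+1) (Nat.succ_pos m)
    rw [← mul_div_assoc, hk2, Finset.sum_div, ← Finset.sum_sub_distrib]
    apply Eq.symm
    apply Finset.sum_eq_zero
    intro k hk
    have hk' : k ≤ m+1 := Nat.lt_succ_iff.mp (mem_range.mp hk)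
    rw [sub_eq_zero, Nat.cast_choose ℝ hk']
    have f1 : ((m+1).factorial : ℝ) ≠ 0 := Nat.cast_ne_zero.mpr (Nat.factorial_ne_zero _)
    have f2 : (k.factorial : ℝ) ≠ 0 := Nat.cast_ne_zero.mpr (Nat.factorial_ne_zero _)
    have f3 : (((m+1-k).factorial : ℕ) : ℝ) ≠ 0 := Nat.cast_ne_zero.mpr (Nat.factorial_ne_zero _)
    field_simp
end

section
/- For integers n ≥ 0 and 0 ≤ k ≤ n, the degenerate Eulerian number satisfies A_λ(n,k) = ∑_{i=0}^{k} binom(n+1, i) (-1)^i (k-i+1)_{n,λ}. -/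
open Finset PowerSeries

open FormalMultilinearSeries
lemma aux_summable_pow (N : ℕ) {r : ℝ} (hr : |r| < 1) :
    Summable fun m : ℕ => ((m : ℝ) + 1) ^ N * r ^ m := by
  have h : ∀ j : ℕ, Summable fun m : ℕ => (m : ℝ) ^ j * r ^ m := fun j =>
    summable_pow_mul_geometric_of_norm_lt_one j (by simpa using hr)
  have e : (fun m : ℕ => ((m : ℝ) + 1) ^ N * r ^ m)
      = fun m : ℕ => ∑ j ∈ Finset.range (N + 1), (N.choose j : ℝ) * ((m : ℝ) ^ j * r ^ m) := by
    funext m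
    rw [add_pow, Finset.sum_mul]
    refine Finset.sum_congr rfl fun j _ => by ring
  rw [e]
  exact summable_sum fun j _ => (h j).mul_left _

lemma dfall_abs_le (l x : ℝ) (n : ℕ) {M : ℝ} (hM : |x| ≤ M) :
    |dfall l x n| ≤ (M + n * |l|) ^ n := by
  rw [dfall, Finset.abs_prod]
  calc ∏ i ∈ Finset.range n, |x - i * l| ≤ ∏ _i ∈ Finset.range n, (M + n * |l|) := by
        refine Finset.prod_le_prod (fun i _ => abs_nonneg _) fun i hi => ?_
        have h1 : |x - i * l| ≤ |x| + i * |l| := by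
          calc |x - i * l| ≤ |x| + |(i:ℝ) * l| := abs_sub _ _
          _ = |x| + i * |l| := by rw [abs_mul, Nat.abs_cast]
        refine h1.trans (add_le_add hM ?_)
        have : (i : ℝ) ≤ n := by exact_mod_cast (Finset.mem_range.mp hi).le
        exact mul_le_mul_of_nonneg_right this (abs_nonneg _)
    _ = (M + n * |l|) ^ n := by rw [Finset.prod_const, Finset.card_range]

lemma dfall_bnd (l : ℝ) (n : ℕ) (x : ℝ) (m : ℕ) (hx : |x| ≤ (m : ℝ) + 1) :
    |dfall l x n| ≤ (1 + n * |l|) ^ n * ((m : ℝ) + 1) ^ n := by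
  refine (dfall_abs_le l x n hx).trans ?_
  rw [← mul_pow]
  refine pow_le_pow_left₀ (by positivity) ?_ n
  have h0 : (0:ℝ) ≤ (m:ℝ) := Nat.cast_nonneg m
  have h1 : (0:ℝ) ≤ (n:ℝ)*|l| := by positivity
  nlinarith

/-- generic: coefficients with radius ≥ 1 summing to F give a power series rep at 0. -/
lemma aux_hasFPS (b : ℕ → ℝ) (F : ℝ → ℝ)
    (hb : ∀ r : ℝ, 0 ≤ r → r < 1 → Summable fun m => |b m| * r ^ m)
    (hF : ∀ x : ℝ, |x| < 1 → HasSum (fun m => b m * x ^ m) (F x)) :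
    HasFPowerSeriesAt F (ofScalars ℝ b) 0 := by
  refine ⟨1, ?_, one_pos, ?_⟩
  · refine ENNReal.le_of_forall_nnreal_lt fun r hr => ?_
    refine FormalMultilinearSeries.le_radius_of_summable_norm _ ?_
    have : ∀ m : ℕ, ‖ofScalars ℝ b m‖ * (r:ℝ) ^ m = |b m| * (r:ℝ) ^ m := by
      intro m; rw [ofScalars_norm]; simp [Real.norm_eq_abs]
    exact (hb r r.coe_nonneg (by exact_mod_cast hr)).congr fun m => (this m).symm
  · intro y hy
    have hy' : |y| < 1 := by
      simpa [EMetric.mem_ball, edist_dist, Real.dist_eq, ENNReal.ofReal_lt_one] using hy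
    have := hF y hy'
    simp only [zero_add]
    convert this using 1
    · rfl
    funext m
    rw [ofScalars_apply_eq]
    simp [smul_eq_mul]

/-- if `A k` (for `k ≤ n`) are the coefficients of the degenerate Eulerian
polynomial, i.e. `∑_j (j+1)_{n,λ} x^j = (∑_{k=0}^n A k x^k)/(1-x)^{n+1}` for `|x|<1`,
then `A k = ∑_{i=0}^k C(n+1,i)(-1)^i (k-i+1)_{n,λ}` for `0 ≤ k ≤ n`. -/
theorem stmt2 (l : ℝ) (n : ℕ) (A : ℕ → ℝ)
    (hA : ∀ x : ℝ, |x| < 1 →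
      (1 - x) ^ (n + 1) * (∑' j : ℕ, dfall l ((j : ℝ) + 1) n * x ^ j) =
        ∑ k ∈ Finset.range (n + 1), A k * x ^ k) :
    ∀ k ≤ n, A k =
      ∑ i ∈ Finset.range (k + 1), ((n+1).choose i : ℝ) * (-1)^i * dfall l ((k : ℝ) - i + 1) n := by
  classical
  set a : ℕ → ℝ := fun i => ((n+1).choose i : ℝ) * (-1)^i with ha
  set c : ℕ → ℝ := fun m => ∑ i ∈ Finset.range (m+1), a i * dfall l ((m:ℝ) - i + 1) n with hc
  set c' : ℕ → ℝ := fun m => if m ≤ n then A m else 0 with hc'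
  set P : ℝ → ℝ := fun x => ∑ k ∈ Finset.range (n+1), A k * x^k with hP
  set C : ℝ := (2:ℝ)^(n+1) * (1 + n*|l|)^n with hC
  have hCpos : 0 ≤ C := by positivity
  -- bound on |a i|
  have hab : ∀ i, |a i| ≤ (2:ℝ)^(n+1) := by
    intro i
    rw [ha]
    rw [abs_mul, abs_pow, abs_neg, abs_one, one_pow, mul_one, Nat.abs_cast]
    by_cases h : i ≤ n+1
    · have : (n+1).choose i ≤ 2^(n+1) := by
        calc (n+1).choose i ≤ ∑ m ∈ Finset.range (n+2), (n+1).choose m :=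
              Finset.single_le_sum (fun m _ => Nat.zero_le _)
                (Finset.mem_range.mpr (Nat.lt_succ_of_le h))
        _ = 2^(n+1) := Nat.sum_range_choose (n+1)
      exact_mod_cast this
    · rw [Nat.choose_eq_zero_of_lt (by omega)]
      norm_num
  -- bound on |c m|
  have hcb : ∀ m, |c m| ≤ C * ((m:ℝ)+1)^(n+1) := by
    intro m
    calc |c m| ≤ ∑ i ∈ Finset.range (m+1), |a i * dfall l ((m:ℝ) - i + 1) n| :=
          Finset.abs_sum_le_sum_abs _ _
    _ ≤ ∑ _i ∈ Finset.range (m+1), C * ((m:ℝ)+1)^n := by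
        refine Finset.sum_le_sum fun i hi => ?_
        rw [abs_mul, hC, mul_assoc]
        have hi' : (i:ℝ) ≤ m := by
          exact_mod_cast Nat.lt_succ_iff.mp (Finset.mem_range.mp hi)
        have hd : |dfall l ((m:ℝ) - i + 1) n| ≤ (1 + n*|l|)^n * ((m:ℝ)+1)^n := by
          refine dfall_bnd l n _ m ?_
          rw [abs_of_nonneg (by linarith)]
          linarith [Nat.cast_nonneg (α := ℝ) i]
        exact mul_le_mul (hab i) hd (abs_nonneg _) (by positivity)
    _ = C * ((m:ℝ)+1)^(n+1) := by
        rw [Finset.sum_const, Finset.card_range, nsmul_eq_mul, pow_succ]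
        push_cast; ring
  -- summability of |c m| * r^m
  have hcs : ∀ r : ℝ, 0 ≤ r → r < 1 → Summable fun m => |c m| * r ^ m := by
    intro r hr0 hr1
    have habs : |r| < 1 := by rwa [abs_of_nonneg hr0]
    refine Summable.of_nonneg_of_le
      (fun m => mul_nonneg (abs_nonneg _) (pow_nonneg hr0 m))
      (fun m => ?_) (((aux_summable_pow (n+1) habs).mul_left C))
    calc |c m| * r ^ m ≤ (C * ((m:ℝ)+1)^(n+1)) * r ^ m :=
          mul_le_mul_of_nonneg_right (hcb m) (pow_nonneg hr0 m)
      _ = C * (((m:ℝ)+1)^(n+1) * r ^ m) := by ring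
  -- HasSum of c at |x| < 1
  have hkey : ∀ x : ℝ, |x| < 1 → HasSum (fun m => c m * x ^ m) (P x) := by
    intro x hx
    have hsa : Summable fun i => ‖a i * x ^ i‖ := by
      refine summable_of_ne_finset_zero (s := Finset.range (n+2)) fun i hi => ?_
      have : (n+1).choose i = 0 := Nat.choose_eq_zero_of_lt (by
        have := Finset.mem_range.not.mp hi; omega)
      simp [ha, this]
    have hsd : Summable fun j : ℕ => ‖dfall l ((j:ℝ) + 1) n * x ^ j‖ := by
      have hx' : |(|x|)| < 1 := by rwa [abs_abs]
      refine Summable.of_nonneg_of_le (fun j => norm_nonneg _) (fun j => ?_)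
        ((aux_summable_pow n hx').mul_left ((1 + n*|l|)^n))
      rw [norm_mul, Real.norm_eq_abs, Real.norm_eq_abs, abs_pow, ← mul_assoc]
      refine mul_le_mul_of_nonneg_right ?_ (pow_nonneg (abs_nonneg x) j)
      have hd := dfall_bnd l n ((j:ℝ)+1) j (by rw [abs_of_nonneg (by positivity)])
      calc |dfall l ((j:ℝ)+1) n| ≤ (1 + n*|l|)^n * ((j:ℝ)+1)^n := hd
        _ = (1 + n*|l|)^n * ((j:ℝ)+1)^n := rfl
    have hsc : Summable fun m => ‖c m * x ^ m‖ := by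
      have := hcs |x| (abs_nonneg x) hx
      refine this.of_nonneg_of_le (fun m => norm_nonneg _) fun m => ?_
      rw [norm_mul, Real.norm_eq_abs, Real.norm_eq_abs, abs_pow]
    refine (hsc.of_norm).hasSum_iff.mpr ?_
    have hcauchy := tsum_mul_tsum_eq_tsum_sum_range_of_summable_norm hsa hsd
    have hinner : ∀ m : ℕ, (∑ i ∈ Finset.range (m+1),
        (a i * x ^ i) * (dfall l ((↑(m - i) : ℝ) + 1) n * x ^ (m - i))) = c m * x ^ m := by
      intro m
      rw [hc, Finset.sum_mul]
      refine Finset.sum_congr rfl fun i hi => ?_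
      have him : i ≤ m := Nat.lt_succ_iff.mp (Finset.mem_range.mp hi)
      have h1 : ((m - i : ℕ) : ℝ) = (m:ℝ) - i := by
        rw [Nat.cast_sub him]
      have h2 : x ^ i * x ^ (m - i) = x ^ m := by
        rw [← pow_add, Nat.add_sub_cancel' him]
      rw [h1]
      calc a i * x ^ i * (dfall l ((m:ℝ) - i + 1) n * x ^ (m - i))
          = a i * dfall l ((m:ℝ) - i + 1) n * (x ^ i * x ^ (m-i)) := by ring
        _ = a i * dfall l ((m:ℝ) - i + 1) n * x ^ m := by rw [h2]
    have hgeom : (∑' i, a i * x ^ i) = (1 - x)^(n+1) := by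
      rw [tsum_eq_sum (s := Finset.range (n+2)) (fun i hi => by
        have : (n+1).choose i = 0 := Nat.choose_eq_zero_of_lt (by
          have := Finset.mem_range.not.mp hi; omega)
        simp [ha, this])]
      have h1x : (1 - x) = (-x) + 1 := by ring
      rw [h1x, add_pow]
      refine Finset.sum_congr rfl fun i _ => ?_
      rw [ha, one_pow, mul_one, neg_pow]
      ring
    calc (∑' m, c m * x ^ m)
        = ∑' m, ∑ i ∈ Finset.range (m+1),
            (a i * x ^ i) * (dfall l ((↑(m - i) : ℝ) + 1) n * x ^ (m - i)) := by
          exact tsum_congr fun m => (hinner m).symm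
      _ = (∑' i, a i * x ^ i) * (∑' j : ℕ, dfall l ((j:ℝ) + 1) n * x ^ j) := hcauchy.symm
      _ = (1 - x)^(n+1) * (∑' j : ℕ, dfall l ((j:ℝ) + 1) n * x ^ j) := by rw [hgeom]
      _ = P x := hA x hx
  have h1 : HasFPowerSeriesAt P (ofScalars ℝ c) 0 := aux_hasFPS c P hcs hkey
  have h2 : HasFPowerSeriesAt P (ofScalars ℝ c') 0 := by
    refine aux_hasFPS c' P (fun r hr0 hr1 => ?_) (fun x hx => ?_)
    · refine summable_of_ne_finset_zero (s := Finset.range (n+1)) fun m hm => ?_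
      have : ¬ m ≤ n := by simpa using Finset.mem_range.not.mp hm
      simp [hc', this]
    · have : HasSum (fun m => c' m * x ^ m) (∑ m ∈ Finset.range (n+1), c' m * x ^ m) := by
        refine hasSum_sum_of_ne_finset_zero fun m hm => ?_
        have : ¬ m ≤ n := by simpa using Finset.mem_range.not.mp hm
        simp [hc', this]
      convert this using 1
      rw [hP]
      refine Finset.sum_congr rfl fun m hm => ?_
      have : m ≤ n := Nat.lt_succ_iff.mp (Finset.mem_range.mp hm)
      simp [hc', this]
  have hcc : c = c' := by
    have := h1.eq_formalMultilinearSeries h2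
    exact (ofScalars_series_eq_iff ℝ c c').mp this
  intro k hk
  have h := congrFun hcc k
  simp only [hc, hc', ha, if_pos hk] at h
  exact h.symm
end

section
/- (Degenerate Worpitzky identity) For every integer n ≥ 0 and all x, ∑_{k=0}^{n} binom(x+k, n) A_{-λ}(n,k) = (x)_{n,λ}, where binom(x+k, n) = (x+k)(x+k-1)···(x+k-n+1)/n! is the generalized binomial coefficient. -/
open Finset PowerSeries

section Aux

open Polynomial

/-- Triangle reindexing for double sums. -/
private lemma tri_aux (N : ℕ) (F : ℕ → ℕ → ℝ) :
    ∑ k ∈ Finset.range N, ∑ i ∈ Finset.range (k+1), F k i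
      = ∑ j ∈ Finset.range N, ∑ i ∈ Finset.range (N - j), F (j+i) i := by
  rw [Finset.sum_sigma', Finset.sum_sigma']
  apply Finset.sum_nbij' (fun p => (⟨p.1 - p.2, p.2⟩ : Σ _ : ℕ, ℕ))
    (fun p => (⟨p.1 + p.2, p.2⟩ : Σ _ : ℕ, ℕ))
  · rintro ⟨k, i⟩ hp
    simp only [Finset.mem_sigma, Finset.mem_range] at *
    omega
  · rintro ⟨j, i⟩ hp
    simp only [Finset.mem_sigma, Finset.mem_range] at *
    omega
  · rintro ⟨k, i⟩ hp
    simp only [Finset.mem_sigma, Finset.mem_range] at hp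
    have hk : k - i + i = k := by omega
    simp [hk]
  · rintro ⟨j, i⟩ hp
    simp only [Finset.mem_sigma, Finset.mem_range] at hp
    have hk : j + i - i = j := by omega
    simp [hk]
  · rintro ⟨k, i⟩ hp
    simp only [Finset.mem_sigma, Finset.mem_range] at hp
    have hk : k - i + i = k := by omega
    simp only []
    rw [hk]

/-- Closed form for the partial alternating binomial transform of falling factorials. -/
private lemma claimA_aux (n : ℕ) : ∀ d j : ℕ, j + d = n → ∀ x : ℝ,
    ∑ i ∈ Finset.range (d+1), ((n+1).choose i : ℝ) * (-1)^i *
        (∏ r ∈ Finset.range n, (x + j + i - r))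
      = (-1)^d * (n.choose j : ℝ) * ∏ r ∈ (Finset.range (n+1)).erase j, (x + r + 1) := by
  intro d
  induction d with
  | zero =>
    intro j hj x
    subst hj
    simp only [Nat.add_zero] at *
    rw [Finset.sum_range_one]
    simp only [Nat.choose_zero_right, Nat.cast_one, pow_zero, Nat.choose_self, one_mul, mul_one,
      Nat.cast_ofNat]
    have he : (Finset.range (j+1)).erase j = Finset.range j := by
      rw [Finset.range_add_one, Finset.erase_insert (by simp)]
    rw [he]
    rw [← Finset.prod_range_reflect (fun r => x + r + 1) j]
    refine Finset.prod_congr rfl fun r hr => ?_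
    have hr' := Finset.mem_range.mp hr
    have : ((j - 1 - r : ℕ) : ℝ) = j - 1 - r := by
      push_cast [Nat.cast_sub (by omega : r ≤ j - 1), Nat.cast_sub (by omega : 1 ≤ j)]
      ring
    rw [this]; ring
  | succ d ih =>
    intro j hj x
    have hjn : j + 1 ≤ n := by omega
    -- split off the top term
    rw [Finset.sum_range_succ]
    have hfirst : ∑ i ∈ Finset.range (d+1), ((n+1).choose i : ℝ) * (-1)^i *
        (∏ r ∈ Finset.range n, (x + j + i - r))
        = (-1)^d * (n.choose (j+1) : ℝ) *
          ∏ r ∈ (Finset.range (n+1)).erase (j+1), (x - 1 + r + 1) := by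
      rw [← ih (j+1) (by omega) (x-1)]
      refine Finset.sum_congr rfl fun i _ => ?_
      congr 1
      refine Finset.prod_congr rfl fun r _ => ?_
      push_cast; ring
    rw [hfirst]
    -- set Q
    set Q : ℝ := ∏ r ∈ (Finset.range n).erase j, (x + r + 1) with hQ
    -- (a)
    have ha : ∏ r ∈ (Finset.range (n+1)).erase (j+1), (x - 1 + r + 1) = x * Q := by
      have h0 : (0:ℕ) ∈ (Finset.range (n+1)).erase (j+1) := by
        simp only [Finset.mem_erase, Finset.mem_range]; omega
      rw [← Finset.mul_prod_erase _ _ h0]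
      have himg : ((Finset.range (n+1)).erase (j+1)).erase 0
          = ((Finset.range n).erase j).image (· + 1) := by
        ext r
        simp only [Finset.mem_erase, Finset.mem_range, Finset.mem_image]
        constructor
        · intro ⟨h1, h2, h3⟩
          exact ⟨r - 1, ⟨by omega, by omega⟩, by omega⟩
        · rintro ⟨s, ⟨hs1, hs2⟩, rfl⟩
          omega
      rw [himg, Finset.prod_image (fun a _ b _ h => by omega)]
      simp only [Nat.cast_zero]
      rw [hQ]
      congr 1
      · ring
      · refine Finset.prod_congr rfl fun r _ => ?_
        push_cast; ring
    -- (b)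
    have hb : ∏ r ∈ Finset.range n, (x + j + (d+1:ℕ) - r) = (x + j + 1) * Q := by
      have hrefl : ∏ r ∈ Finset.range n, (x + j + (d+1:ℕ) - r)
          = ∏ r ∈ Finset.range n, (x + r + 1) := by
        rw [← Finset.prod_range_reflect (fun r => x + r + 1) n]
        refine Finset.prod_congr rfl fun r hr => ?_
        have hr' := Finset.mem_range.mp hr
        have : ((n - 1 - r : ℕ) : ℝ) = n - 1 - r := by
          push_cast [Nat.cast_sub (by omega : r ≤ n - 1), Nat.cast_sub (by omega : 1 ≤ n)]
          ring
        rw [this]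
        have hn : (n : ℝ) = (j : ℝ) + ((d:ℝ) + 1) := by
          have : ((j + (d+1) : ℕ) : ℝ) = (n : ℝ) := by
            exact_mod_cast congrArg (Nat.cast (R := ℝ)) hj
          push_cast at this
          linarith
        rw [hn]; push_cast; ring
      rw [hrefl, ← Finset.mul_prod_erase _ _ (Finset.mem_range.mpr (by omega : j < n)), hQ]
    -- (c)
    have hc : ∏ r ∈ (Finset.range (n+1)).erase j, (x + r + 1) = (x + n + 1) * Q := by
      have : (Finset.range (n+1)).erase j = insert n ((Finset.range n).erase j) := by
        rw [Finset.range_add_one, Finset.erase_insert_of_ne (by omega)]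
      rw [this, Finset.prod_insert (by simp)]
    rw [ha, hb, hc]
    -- numeric identities
    have key1 : ((n+1).choose (d+1) : ℝ) = (n.choose j : ℝ) + (n.choose (j+1) : ℝ) := by
      have hsymm : (n+1).choose (d+1) = (n+1).choose (j+1) := by
        rw [← Nat.choose_symm (by omega : j+1 ≤ n+1)]
        congr 1; omega
      rw [hsymm, Nat.choose_succ_succ]
      push_cast; ring
    have key2 : (n.choose (j+1) : ℝ) * (j+1) = (n.choose j : ℝ) * (d+1) := by
      have := Nat.choose_succ_right_eq n j
      have hd : n - j = d + 1 := by omega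
      rw [hd] at this
      exact_mod_cast congrArg (Nat.cast (R := ℝ)) this
    have hn : (n : ℝ) = (j:ℝ) + (d:ℝ) + 1 := by
      have : ((j + (d+1) : ℕ) : ℝ) = (n : ℝ) := by
        exact_mod_cast congrArg (Nat.cast (R := ℝ)) hj
      push_cast at this
      linarith
    rw [key1]
    linear_combination ((-1:ℝ)^(d+1) * Q) * key2 + ((-1:ℝ)^d * Q * (n.choose j : ℝ)) * hn

/-- Product of node differences. -/
private lemma nodeProd_aux (n j : ℕ) (hj : j ≤ n) :
    ∏ r ∈ (Finset.range (n+1)).erase j, ((r:ℝ) - j)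
      = (-1)^j * j.factorial * (n-j).factorial := by
  have h1 : (Finset.range (n+1)).erase j = (Finset.range j) ∪ (Finset.Ico (j+1) (n+1)) := by
    ext r
    simp only [Finset.mem_erase, Finset.mem_range, Finset.mem_union, Finset.mem_Ico,
      Nat.lt_succ_iff]
    omega
  rw [h1, Finset.prod_union (by simp [Finset.disjoint_left]; omega)]
  have h2 : ∏ r ∈ Finset.range j, ((r:ℝ) - j) = (-1)^j * j.factorial := by
    have : ∀ r ∈ Finset.range j, ((r:ℝ) - j) = (-1) * (((j - r : ℕ) : ℝ)) := by
      intro r hr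
      have := Finset.mem_range.mp hr
      push_cast [Nat.cast_sub this.le]
      ring
    rw [Finset.prod_congr rfl this, Finset.prod_mul_distrib, Finset.prod_const,
      Finset.card_range, ← Nat.cast_prod]
    rw [← Finset.prod_range_reflect (fun r => j - r) j]
    have : ∀ r ∈ Finset.range j, j - (j - 1 - r) = r + 1 := by
      intro r hr; have := Finset.mem_range.mp hr; omega
    rw [Finset.prod_congr rfl this, Finset.prod_range_add_one_eq_factorial]
  have h3 : ∏ r ∈ Finset.Ico (j+1) (n+1), ((r:ℝ) - j) = (n-j).factorial := by
    rw [Finset.prod_Ico_eq_prod_range]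
    have : ∀ r ∈ Finset.range (n+1-(j+1)), ((j+1+r : ℕ):ℝ) - j = ((r+1 : ℕ) : ℝ) := by
      intro r hr; push_cast; ring
    rw [Finset.prod_congr rfl this, ← Nat.cast_prod, Finset.prod_range_add_one_eq_factorial]
    congr 2
    omega
  rw [h2, h3]

/-- Lagrange interpolation of the degenerate falling factorial at the nodes `-(j+1)`. -/
private lemma lag_aux (l : ℝ) (n : ℕ) (x : ℝ) :
    dfall l x n = ∑ j ∈ Finset.range (n+1),
      ((-1:ℝ)^n * dfall (-l) ((j:ℝ)+1) n) *
        ((∏ r ∈ (Finset.range (n+1)).erase j, ((r:ℝ) - j))⁻¹ *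
         ∏ r ∈ (Finset.range (n+1)).erase j, (x + r + 1)) := by
  set v : ℕ → ℝ := fun j => -((j:ℝ)+1) with hv
  set f : ℝ[X] := ∏ r ∈ Finset.range n, (Polynomial.X - Polynomial.C ((r:ℝ)*l)) with hf
  have hinj : Set.InjOn v (Finset.range (n+1)) := by
    intro a _ b _ h
    simp only [hv, neg_inj] at h
    exact_mod_cast add_right_cancel h
  have hdeg : f.degree < #(Finset.range (n+1)) := by
    rw [hf, Polynomial.degree_prod]
    simp only [Polynomial.degree_X_sub_C, Finset.sum_const, Finset.card_range, nsmul_eq_mul,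
      mul_one]
    exact_mod_cast Nat.lt_succ_self n
  have h := Lagrange.eq_interpolate hinj hdeg
  have h2 := congrArg (Polynomial.eval x) h
  rw [Lagrange.interpolate_apply] at h2
  rw [Polynomial.eval_finset_sum] at h2
  have hL : Polynomial.eval x f = dfall l x n := by
    rw [hf, Polynomial.eval_prod, dfall]
    exact Finset.prod_congr rfl fun r _ => by simp
  rw [hL] at h2
  rw [h2]
  refine Finset.sum_congr rfl fun j hj => ?_
  rw [Polynomial.eval_mul, Polynomial.eval_C]
  congr 1
  · rw [hf, Polynomial.eval_prod, dfall]
    have hpow : ((-1:ℝ))^n = ∏ _i ∈ Finset.range n, (-1:ℝ) := by simp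
    rw [hpow, ← Finset.prod_mul_distrib]
    refine Finset.prod_congr rfl fun r _ => by simp [hv]; ring
  · rw [Lagrange.basis]
    rw [Polynomial.eval_prod]
    rw [← Finset.prod_inv_distrib, ← Finset.prod_mul_distrib]
    refine Finset.prod_congr rfl fun r hr => ?_
    rw [Lagrange.basisDivisor, Polynomial.eval_mul, Polynomial.eval_C, Polynomial.eval_sub,
      Polynomial.eval_X, Polynomial.eval_C]
    congr 1
    · congr 1; simp [hv]; ring
    · simp [hv]; ring

end Aux

/-- degenerate Worpitzky identity:
`∑_{k=0}^n binom(x+k, n) A_{-λ}(n,k) = (x)_{n,λ}` for all `x` and `n ≥ 0`. -/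
theorem stmt8 (l : ℝ) (n : ℕ) (x : ℝ) :
    ∑ k ∈ Finset.range (n + 1), genBinom (x + k) n * degEulerianNum (-l) n k
      = dfall l x n := by
  have step1 : ∑ k ∈ Finset.range (n + 1), genBinom (x + k) n * degEulerianNum (-l) n k
      = ∑ k ∈ Finset.range (n+1), ∑ i ∈ Finset.range (k+1),
          genBinom (x + k) n * (((n+1).choose i : ℝ) * (-1)^i
            * dfall (-l) ((k:ℝ) - i + 1) n) := by
    refine Finset.sum_congr rfl fun k _ => ?_
    rw [degEulerianNum, Finset.mul_sum]
  have step2 := tri_aux (n+1) (fun k i => genBinom (x + k) n *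
    (((n+1).choose i : ℝ) * (-1)^i * dfall (-l) ((k:ℝ) - i + 1) n))
  rw [step1, step2]
  have step3 : ∀ j ∈ Finset.range (n+1),
      ∑ i ∈ Finset.range (n+1-j), genBinom (x + ((j+i : ℕ):ℝ)) n *
          (((n+1).choose i : ℝ) * (-1)^i * dfall (-l) (((j+i:ℕ):ℝ) - i + 1) n)
      = dfall (-l) ((j:ℝ)+1) n / n.factorial *
          ((-1:ℝ)^(n-j) * (n.choose j : ℝ)
            * ∏ r ∈ (Finset.range (n+1)).erase j, (x + r + 1)) := by
    intro j hj
    have hjn : j ≤ n := by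
      have := Finset.mem_range.mp hj; omega
    have hC := claimA_aux n (n-j) j (by omega) x
    have hrange : n + 1 - j = (n - j) + 1 := by omega
    rw [hrange]
    rw [mul_comm ((-1:ℝ)^(n-j)) ((n.choose j : ℝ))] at hC ⊢
    rw [← hC, Finset.mul_sum]
    refine Finset.sum_congr rfl fun i _ => ?_
    have harg : ((j+i:ℕ):ℝ) - i + 1 = (j:ℝ) + 1 := by push_cast; ring
    have hprod : ∏ r ∈ Finset.range n, (x + ((j+i : ℕ):ℝ) - r)
        = ∏ r ∈ Finset.range n, (x + j + i - r) := by
      refine Finset.prod_congr rfl fun r _ => by push_cast; ring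
    rw [harg, genBinom, hprod]
    field_simp
  rw [Finset.sum_congr rfl step3, lag_aux l n x]
  refine Finset.sum_congr rfl fun j hj => ?_
  have hjn : j ≤ n := by
    have := Finset.mem_range.mp hj; omega
  rw [nodeProd_aux n j hjn]
  have hfne : (n.factorial : ℝ) ≠ 0 := Nat.cast_ne_zero.mpr (Nat.factorial_ne_zero n)
  have hjne : (j.factorial : ℝ) ≠ 0 := Nat.cast_ne_zero.mpr (Nat.factorial_ne_zero j)
  have hnjne : ((n-j).factorial : ℝ) ≠ 0 := Nat.cast_ne_zero.mpr (Nat.factorial_ne_zero (n-j))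
  have key : ((-1:ℝ)^j * j.factorial * (n-j).factorial)⁻¹
      = (-1:ℝ)^j * (n.choose j : ℝ) / n.factorial := by
    refine inv_eq_of_mul_eq_one_right ?_
    have hcf : (n.choose j : ℝ) * j.factorial * (n-j).factorial = n.factorial := by
      exact_mod_cast congrArg (Nat.cast (R := ℝ)) (Nat.choose_mul_factorial_mul_factorial hjn)
    have hsq : ((-1:ℝ)^j) * ((-1)^j) = 1 := by
      rw [← pow_add, ← two_mul, pow_mul]
      norm_num
    calc ((-1:ℝ)^j * j.factorial * (n-j).factorial) * ((-1:ℝ)^j * (n.choose j : ℝ) / n.factorial)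
        = (((-1:ℝ)^j) * ((-1)^j)) * (((n.choose j : ℝ) * j.factorial * (n-j).factorial)
            / n.factorial) := by ring
      _ = 1 := by rw [hsq, hcf, one_mul, div_self hfne]
  rw [key]
  have hsign : ((-1:ℝ))^(n-j) = (-1)^n * (-1)^j := by
    rw [← pow_add, show n + j = (n-j) + 2*j by omega, pow_add, pow_mul]
    norm_num
  rw [hsign]
  ring
end

section
/- For all x and integers n ≥ 1, 0 ≤ k ≤ n: (n-k)·binom(x+k+1, n+1) + (k+1)·binom(x+k, n+1) = x·binom(x+k, n), where binom(y, m) = y(y-1)···(y-m+1)/m! is the generalized binomial coefficient. -/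
open Finset PowerSeries

/-- `(n-k) binom(x+k+1, n+1) + (k+1) binom(x+k, n+1) = x binom(x+k, n)`
for `n ≥ 1` and `0 ≤ k ≤ n`. -/
theorem stmt10 (x : ℝ) (n k : ℕ) (hn : 1 ≤ n) (hk : k ≤ n) :
    ((n : ℝ) - k) * genBinom (x + k + 1) (n + 1) + ((k : ℝ) + 1) * genBinom (x + k) (n + 1)
      = x * genBinom (x + k) n := by
  unfold genBinom
  have h1 : ∏ i ∈ Finset.range (n+1), (x + k + 1 - i)
      = (x + k + 1) * ∏ i ∈ Finset.range n, (x + k - i) := by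
    rw [Finset.prod_range_succ']
    simp only [Nat.cast_zero, Nat.cast_add, Nat.cast_one]
    rw [mul_comm]
    congr 1
    · norm_num
    · exact Finset.prod_congr rfl fun i _ => by ring
  have h2 : ∏ i ∈ Finset.range (n+1), (x + k - i)
      = (∏ i ∈ Finset.range n, (x + k - i)) * (x + k - n) := by
    rw [Finset.prod_range_succ]
  rw [h1, h2, Nat.factorial_succ]
  have hf : (n.factorial : ℝ) ≠ 0 := Nat.cast_ne_zero.mpr n.factorial_ne_zero
  have hn1 : ((n:ℝ) + 1) ≠ 0 := by positivity
  push_cast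
  field_simp
  ring
end

section
/- For integers n ≥ k ≥ 0, the degenerate Stirling number of the second kind satisfies {n brace k}_λ = (1/k!) ∑_{j=0}^{n} A_{-λ}(n,j) binom(j, n-k). -/
open Finset PowerSeries

-- real descending factorial at a natural
lemma prodDesc (M nn : ℕ) :
    ∏ t ∈ Finset.range nn, ((M:ℝ) - t) = (nn.factorial : ℝ) * (M.choose nn : ℝ) := by
  induction nn with
  | zero => simp
  | succ m ih =>
    rw [Finset.prod_range_succ, ih]
    rcases le_or_gt m M with h | h
    · have : (M:ℝ) - m = ((M - m : ℕ) : ℝ) := by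
        push_cast [Nat.cast_sub h]; ring
      rw [this]
      have h2 : (M.choose (m+1)) * (m+1) = M.choose m * (M - m) := Nat.choose_succ_right_eq M m
      have h2' : ((M.choose (m+1)) * (m+1) : ℝ) = (M.choose m : ℝ) * ((M - m : ℕ) : ℝ) := by
        exact_mod_cast congrArg (Nat.cast : ℕ → ℝ) h2
      rw [Nat.factorial_succ]
      push_cast
      nlinarith [h2']
    · rw [Nat.choose_eq_zero_of_lt h, Nat.choose_eq_zero_of_lt (Nat.lt_succ_of_lt h)]
      simp

-- fwdDiff of dfall 1
lemma D2a (j : ℕ) :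
    fwdDiff (1:ℕ) (fun i : ℕ => dfall 1 (i:ℝ) (j+1)) = fun i : ℕ => ((j:ℝ)+1) * dfall 1 (i:ℝ) j := by
  funext i
  have h1 : dfall 1 ((i:ℝ)+1) (j+1) = dfall 1 (i:ℝ) j * ((i:ℝ)+1) := by
    rw [dfall, Finset.prod_range_succ']
    simp only [Nat.cast_zero]
    rw [dfall]
    congr 1
    · exact Finset.prod_congr rfl fun t _ => by push_cast; ring
    · ring
  have h2 : dfall 1 (i:ℝ) (j+1) = dfall 1 (i:ℝ) j * ((i:ℝ) - j) := by
    rw [dfall, Finset.prod_range_succ, dfall, mul_one]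
  simp only [fwdDiff]
  push_cast
  rw [h1, h2]
  ring

lemma fwdDiff_iter_zero_fun (k : ℕ) :
    (fwdDiff (1:ℕ))^[k] (fun _ : ℕ => (0:ℝ)) = fun _ => (0:ℝ) := by
  induction k with
  | zero => rfl
  | succ m ih => rw [Function.iterate_succ_apply, show fwdDiff (1:ℕ) (fun _ : ℕ => (0:ℝ)) = fun _ => (0:ℝ) from funext fun _ => sub_self _, ih]

lemma D2 (j k : ℕ) :
    (fwdDiff (1:ℕ))^[k] (fun i : ℕ => dfall 1 (i:ℝ) j) 0 = if j = k then (k.factorial : ℝ) else 0 := by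
  induction k generalizing j with
  | zero =>
    simp only [Function.iterate_zero, id_eq, Nat.cast_zero, Nat.factorial_zero, Nat.cast_one]
    cases j with
    | zero => simp [dfall]
    | succ m =>
      rw [if_neg (Nat.succ_ne_zero m)]
      exact Finset.prod_eq_zero (Finset.mem_range.2 (Nat.succ_pos m)) (by simp)
  | succ m ih =>
    rw [Function.iterate_succ_apply]
    cases j with
    | zero =>
      have h0 : fwdDiff (1:ℕ) (fun i : ℕ => dfall 1 (i:ℝ) 0) = fun _ : ℕ => (0:ℝ) := by
        funext i; simp [fwdDiff, dfall]
      rw [h0, fwdDiff_iter_zero_fun, if_neg (by omega)]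
    | succ j' =>
      rw [D2a j']
      have : (fun i : ℕ => ((j':ℝ)+1) * dfall 1 (i:ℝ) j') = ((j':ℝ)+1) • (fun i : ℕ => dfall 1 (i:ℝ) j') := by
        funext i; simp
      rw [this, fwdDiff_iter_const_smul]
      simp only [Pi.smul_apply, smul_eq_mul, ih j']
      rcases eq_or_ne j' m with rfl | hne
      · rw [if_pos rfl, if_pos rfl, Nat.factorial_succ]; push_cast; ring
      · rw [if_neg hne, if_neg (by omega), mul_zero]

lemma I1a (k n j : ℕ) (hk : k ≤ n) :
    (fwdDiff (1:ℕ))^[k] (fun i : ℕ => (((i+j).choose n : ℕ) : ℝ)) = fun i : ℕ => (((i+j).choose (n-k) : ℕ) : ℝ) := by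
  induction k generalizing n with
  | zero => simp
  | succ m ih =>
    obtain ⟨n', rfl⟩ : ∃ n', n = n' + 1 := ⟨n - 1, by omega⟩
    rw [Function.iterate_succ_apply]
    have h1 : fwdDiff (1:ℕ) (fun i : ℕ => (((i+j).choose (n'+1) : ℕ) : ℝ)) = fun i : ℕ => (((i+j).choose n' : ℕ) : ℝ) := by
      funext i
      simp only [fwdDiff]
      have : (i + 1 + j).choose (n'+1) = (i+j).choose n' + (i+j).choose (n'+1) := by
        rw [show i + 1 + j = (i+j) + 1 by ring, Nat.choose_succ_succ]
      rw [this]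
      push_cast; ring
    rw [h1, ih n' (by omega)]
    have : n' - m = n' + 1 - (m + 1) := by omega
    rw [this]

lemma fwdDiff_eval_poly (q : Polynomial ℝ) :
    fwdDiff (1:ℝ) (fun x : ℝ => q.eval x) =
      fun x : ℝ => (q.comp (Polynomial.X + Polynomial.C 1) - q).eval x := by
  funext x
  simp [fwdDiff, Polynomial.eval_comp]

lemma natDeg_diff (q : Polynomial ℝ) (m : ℕ) (hq : q.natDegree ≤ m + 1) :
    (q.comp (Polynomial.X + Polynomial.C 1) - q).natDegree ≤ m := by
  rcases eq_or_ne (q.comp (Polynomial.X + Polynomial.C 1) - q) 0 with h | h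
  · rw [h]; simp
  rcases Nat.eq_zero_or_pos q.natDegree with h0 | h0
  · obtain ⟨a, ha⟩ := Polynomial.natDegree_eq_zero.1 h0
    rw [← ha] at h
    simp at h
  · have hq0 : q ≠ 0 := fun hh => by simp [hh] at h0
    have hdcomp : (q.comp (Polynomial.X + Polynomial.C 1)).natDegree = q.natDegree := by
      rw [Polynomial.natDegree_comp, Polynomial.natDegree_X_add_C, mul_one]
    have hlc : (q.comp (Polynomial.X + Polynomial.C 1)).leadingCoeff = q.leadingCoeff := by
      rw [Polynomial.leadingCoeff_comp (by rw [Polynomial.natDegree_X_add_C]; omega),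
        Polynomial.leadingCoeff_X_add_C, one_pow, mul_one]
    have hcomp0 : q.comp (Polynomial.X + Polynomial.C 1) ≠ 0 := by
      intro hh
      rw [hh] at hlc
      exact hq0 (Polynomial.leadingCoeff_eq_zero.1 hlc.symm)
    have hdeg : (q.comp (Polynomial.X + Polynomial.C 1)).degree = q.degree := by
      rw [Polynomial.degree_eq_natDegree hcomp0, Polynomial.degree_eq_natDegree hq0, hdcomp]
    have hlt := Polynomial.degree_sub_lt hdeg hcomp0 hlc
    rw [hdeg] at hlt
    have := Polynomial.natDegree_lt_natDegree h hlt
    omega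

lemma Kpoly : ∀ (m : ℕ) (q : Polynomial ℝ), q.natDegree ≤ m →
    (fwdDiff (1:ℝ))^[m+1] (fun x : ℝ => q.eval x) = fun _ => (0:ℝ) := by
  intro m
  induction m with
  | zero =>
    intro q hq
    obtain ⟨a, ha⟩ := Polynomial.natDegree_eq_zero.1 (Nat.le_zero.1 hq)
    rw [← ha]
    funext x
    simp [fwdDiff]
  | succ m ih =>
    intro q hq
    rw [Function.iterate_succ_apply, fwdDiff_eval_poly]
    exact ih _ (natDeg_diff q m hq)

lemma K_r (l : ℝ) (n : ℕ) :
    (fwdDiff (1:ℝ))^[n+1] (fun x : ℝ => dfall (-l) x n) = fun _ => (0:ℝ) := by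
  have heq : (fun x : ℝ => dfall (-l) x n) =
      fun x => (∏ t ∈ Finset.range n, (Polynomial.X + Polynomial.C ((t:ℝ)*l))).eval x := by
    funext x
    rw [Polynomial.eval_prod, dfall]
    exact Finset.prod_congr rfl fun t _ => by
      simp only [Polynomial.eval_add, Polynomial.eval_X, Polynomial.eval_C]; ring
  rw [heq]
  refine Kpoly n _ ?_
  refine le_trans (Polynomial.natDegree_prod_le _ _) ?_
  simp only [Polynomial.natDegree_X_add_C]
  simp

noncomputable def Bser (l : ℝ) (n : ℕ) : PowerSeries ℝ :=
  PowerSeries.mk fun t => dfall (-l) ((t:ℝ)+1) n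

lemma coeffU (n j : ℕ) :
    (PowerSeries.coeff j) ((1 - PowerSeries.X)^(n+1)) =
      if j ≤ n+1 then (-1:ℝ)^j * (((n+1).choose j : ℕ) : ℝ) else 0 := by
  have h : ((1:PowerSeries ℝ) - PowerSeries.X)^(n+1) =
      ∑ i ∈ Finset.range (n+2),
        PowerSeries.C ((-1:ℝ)^i * (((n+1).choose i : ℕ) : ℝ)) * PowerSeries.X^i := by
    rw [sub_eq_add_neg, add_comm, add_pow]
    refine Finset.sum_congr rfl fun i hi => ?_
    have h1 : ((-1 : PowerSeries ℝ))^i = PowerSeries.C ((-1:ℝ)^i) := by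
      rw [map_pow, map_neg, map_one]
    have h2 : (((n+1).choose i : ℕ) : PowerSeries ℝ) = PowerSeries.C (((n+1).choose i : ℕ) : ℝ) := by
      rw [map_natCast]
    rw [neg_pow, one_pow, mul_one, h1, h2, map_mul]
    ring
  rw [h, map_sum]
  simp only [PowerSeries.coeff_C_mul, PowerSeries.coeff_X_pow, mul_ite, mul_one, mul_zero]
  rw [Finset.sum_ite_eq]
  simp [Nat.lt_succ_iff]

lemma hAcoeff (l : ℝ) (n t : ℕ) (ht : t ≤ n) :
    (PowerSeries.coeff t) ((1 - PowerSeries.X)^(n+1) * Bser l n) = degEulerianNum (-l) n t := by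
  rw [PowerSeries.coeff_mul, Finset.Nat.sum_antidiagonal_eq_sum_range_succ_mk, degEulerianNum]
  refine Finset.sum_congr rfl fun i hi => ?_
  have hi' : i ≤ t := Nat.lt_succ_iff.1 (Finset.mem_range.1 hi)
  rw [coeffU, if_pos (by omega)]
  show (-1:ℝ)^i * _ * ((PowerSeries.coeff (t-i)) (Bser l n)) = _
  rw [Bser, PowerSeries.coeff_mk]
  have harg : ((t - i : ℕ) : ℝ) + 1 = (t:ℝ) - i + 1 := by
    rw [Nat.cast_sub hi']
  rw [harg]
  ring

lemma hAzero (l : ℝ) (n t : ℕ) (ht : n + 1 ≤ t) :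
    (PowerSeries.coeff t) ((1 - PowerSeries.X)^(n+1) * Bser l n) = 0 := by
  rw [PowerSeries.coeff_mul, Finset.Nat.sum_antidiagonal_eq_sum_range_succ_mk]
  have hsub : ∑ i ∈ Finset.range (t+1),
      (PowerSeries.coeff i) ((1 - PowerSeries.X)^(n+1)) * (PowerSeries.coeff (t-i)) (Bser l n)
      = ∑ i ∈ Finset.range (n+2),
      (PowerSeries.coeff i) ((1 - PowerSeries.X)^(n+1)) * (PowerSeries.coeff (t-i)) (Bser l n) := by
    refine (Finset.sum_subset (by intro x hx; simp at hx ⊢; omega) ?_).symm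
    intro x hx hx'
    simp only [Finset.mem_range] at hx hx'
    rw [coeffU, if_neg (by omega), zero_mul]
  rw [hsub]
  have hre := Finset.sum_range_reflect (fun i =>
      (PowerSeries.coeff i) ((1 - PowerSeries.X)^(n+1)) * (PowerSeries.coeff (t-i)) (Bser l n)) (n+2)
  rw [← hre]
  have hK := congrFun (K_r l n) ((t:ℝ) - n)
  rw [fwdDiff_iter_eq_sum_shift] at hK
  rw [← hK]
  refine Finset.sum_congr rfl fun s hs => ?_
  have hs' : s ≤ n + 1 := Nat.lt_succ_iff.1 (Finset.mem_range.1 hs)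
  rw [coeffU, if_pos (by omega), Bser, PowerSeries.coeff_mk]
  have h1 : (n+1).choose (n + 2 - 1 - s) = (n+1).choose s := by
    rw [show n + 2 - 1 - s = n + 1 - s by omega, Nat.choose_symm hs']
  have h2 : ((t - (n + 2 - 1 - s) : ℕ) : ℝ) + 1 = (t:ℝ) - n + s • (1:ℝ) := by
    rw [show t - (n + 2 - 1 - s) = t - (n+1) + s by omega, nsmul_eq_mul, mul_one]
    push_cast [Nat.cast_sub (show n + 1 ≤ t by omega)]
    ring
  rw [h1, h2, zsmul_eq_mul]
  push_cast
  ring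

lemma dW (l : ℝ) (n m : ℕ) :
    dfall (-l) ((m:ℝ)+1) n =
      ∑ j ∈ Finset.range (n+1), degEulerianNum (-l) n j * (((m + n - j).choose n : ℕ) : ℝ) := by
  have hB : Bser l n = (PowerSeries.mk fun p => ((Nat.choose (n + p) n : ℕ) : ℝ)) *
      ((1 - PowerSeries.X)^(n+1) * Bser l n) := by
    rw [← mul_assoc, mk_add_choose_mul_one_sub_pow_eq_one, one_mul]
  have hm : dfall (-l) ((m:ℝ)+1) n = PowerSeries.coeff m (Bser l n) := by
    rw [Bser, PowerSeries.coeff_mk]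
  rw [hm, hB, PowerSeries.coeff_mul, Finset.Nat.sum_antidiagonal_eq_sum_range_succ_mk]
  simp only [PowerSeries.coeff_mk]
  have hre := Finset.sum_range_reflect (fun u =>
      ((Nat.choose (n + u) n : ℕ) : ℝ) * (PowerSeries.coeff (m - u)) ((1 - PowerSeries.X)^(n+1) * Bser l n)) (m+1)
  rw [← hre]
  -- now LHS-sum : ∑ j ∈ range (m+1), C(n + (m+1-1-j)) * Âcoeff (m - (m+1-1-j))
  have hleft : ∀ j ∈ Finset.range (m+1),
      ((Nat.choose (n + (m + 1 - 1 - j)) n : ℕ) : ℝ) *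
        (PowerSeries.coeff (m - (m + 1 - 1 - j))) ((1 - PowerSeries.X)^(n+1) * Bser l n)
      = ((Nat.choose (m + n - j) n : ℕ) : ℝ) *
        (PowerSeries.coeff j) ((1 - PowerSeries.X)^(n+1) * Bser l n) := by
    intro j hj
    have hj' : j ≤ m := Nat.lt_succ_iff.1 (Finset.mem_range.1 hj)
    rw [show m + 1 - 1 - j = m - j by omega, show m - (m - j) = j by omega,
      show n + (m - j) = m + n - j by omega]
  rw [Finset.sum_congr rfl hleft]
  -- both sides equal sum over range (max m n + 1)
  set N := max m n with hN
  have hL : ∑ j ∈ Finset.range (m+1), ((Nat.choose (m + n - j) n : ℕ) : ℝ) *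
        (PowerSeries.coeff j) ((1 - PowerSeries.X)^(n+1) * Bser l n)
      = ∑ j ∈ Finset.range (N+1), ((Nat.choose (m + n - j) n : ℕ) : ℝ) *
        (PowerSeries.coeff j) ((1 - PowerSeries.X)^(n+1) * Bser l n) := by
    refine Finset.sum_subset (by intro x hx; simp at hx ⊢; omega) ?_
    intro x hx hx'
    simp only [Finset.mem_range] at hx hx'
    have hxm : m < x := by omega
    have hxn : x ≤ n := by omega
    rw [Nat.choose_eq_zero_of_lt (by omega), Nat.cast_zero, zero_mul]
  have hR : ∑ j ∈ Finset.range (n+1), degEulerianNum (-l) n j * (((m + n - j).choose n : ℕ) : ℝ)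
      = ∑ j ∈ Finset.range (N+1), ((Nat.choose (m + n - j) n : ℕ) : ℝ) *
        (PowerSeries.coeff j) ((1 - PowerSeries.X)^(n+1) * Bser l n) := by
    have hcg : ∀ j ∈ Finset.range (n+1), degEulerianNum (-l) n j * (((m + n - j).choose n : ℕ) : ℝ)
        = ((Nat.choose (m + n - j) n : ℕ) : ℝ) *
          (PowerSeries.coeff j) ((1 - PowerSeries.X)^(n+1) * Bser l n) := by
      intro j hj
      rw [hAcoeff l n j (Nat.lt_succ_iff.1 (Finset.mem_range.1 hj))]
      exact mul_comm _ _
    rw [Finset.sum_congr rfl hcg]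
    refine Finset.sum_subset (by intro x hx; simp at hx ⊢; omega) ?_
    intro x hx hx'
    simp only [Finset.mem_range] at hx hx'
    rw [hAzero l n x (by omega), mul_zero]
  rw [hL, hR]

lemma prodNeg (n : ℕ) (g : ℕ → ℝ) :
    ∏ t ∈ Finset.range n, (-(g t)) = (-1:ℝ)^n * ∏ t ∈ Finset.range n, g t := by
  calc ∏ t ∈ Finset.range n, (-(g t)) = ∏ t ∈ Finset.range n, ((-1) * g t) := by
        refine Finset.prod_congr rfl fun t _ => by ring
    _ = (∏ _t ∈ Finset.range n, (-1:ℝ)) * ∏ t ∈ Finset.range n, g t := Finset.prod_mul_distrib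
    _ = (-1:ℝ)^n * ∏ t ∈ Finset.range n, g t := by rw [Finset.prod_const, Finset.card_range]

lemma WP (l : ℝ) (n : ℕ) :
    (∏ t ∈ Finset.range n, (Polynomial.X + Polynomial.C ((t:ℝ)*l))) =
      ∑ j ∈ Finset.range (n+1), Polynomial.C (degEulerianNum (-l) n j * ((n.factorial : ℝ))⁻¹) *
        ∏ t ∈ Finset.range n, (Polynomial.X + Polynomial.C ((n:ℝ)-1-(j:ℝ)-(t:ℝ))) := by
  apply Polynomial.eq_of_infinite_eval_eq
  apply Set.infinite_of_injective_forall_mem (f := fun m : ℕ => (m:ℝ)+1)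
  · intro a b hab
    simp only [add_left_inj, Nat.cast_inj] at hab
    exact hab
  · intro m
    simp only [Set.mem_setOf_eq]
    have h1 : Polynomial.eval ((m:ℝ)+1) (∏ t ∈ Finset.range n, (Polynomial.X + Polynomial.C ((t:ℝ)*l)))
        = dfall (-l) ((m:ℝ)+1) n := by
      rw [Polynomial.eval_prod, dfall]
      exact Finset.prod_congr rfl fun t _ => by
        simp only [Polynomial.eval_add, Polynomial.eval_X, Polynomial.eval_C]; ring
    have h2 : Polynomial.eval ((m:ℝ)+1)
          (∑ j ∈ Finset.range (n+1), Polynomial.C (degEulerianNum (-l) n j * ((n.factorial : ℝ))⁻¹) *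
            ∏ t ∈ Finset.range n, (Polynomial.X + Polynomial.C ((n:ℝ)-1-(j:ℝ)-(t:ℝ))))
        = ∑ j ∈ Finset.range (n+1), degEulerianNum (-l) n j * (((m + n - j).choose n : ℕ) : ℝ) := by
      rw [Polynomial.eval_finset_sum]
      refine Finset.sum_congr rfl fun j hj => ?_
      have hj' : j ≤ n := Nat.lt_succ_iff.1 (Finset.mem_range.1 hj)
      rw [Polynomial.eval_mul, Polynomial.eval_C, Polynomial.eval_prod]
      have hfac : ∀ t ∈ Finset.range n,
          Polynomial.eval ((m:ℝ)+1) (Polynomial.X + Polynomial.C ((n:ℝ)-1-(j:ℝ)-(t:ℝ)))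
          = ((m + n - j : ℕ) : ℝ) - (t:ℝ) := by
        intro t _
        simp only [Polynomial.eval_add, Polynomial.eval_X, Polynomial.eval_C]
        rw [Nat.cast_sub (by omega : j ≤ m + n)]
        push_cast
        ring
      rw [Finset.prod_congr rfl hfac, prodDesc (m + n - j) n]
      have hnfac : (n.factorial : ℝ) ≠ 0 := Nat.cast_ne_zero.2 n.factorial_ne_zero
      field_simp
    rw [h1, h2, dW]

lemma WN (l : ℝ) (n i : ℕ) :
    dfall l (i:ℝ) n = ∑ j ∈ Finset.range (n+1),
      degEulerianNum (-l) n j * (((i+j).choose n : ℕ) : ℝ) := by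
  have h0 : dfall l (i:ℝ) n = (-1:ℝ)^n *
      Polynomial.eval (-(i:ℝ)) (∏ t ∈ Finset.range n, (Polynomial.X + Polynomial.C ((t:ℝ)*l))) := by
    rw [Polynomial.eval_prod]
    have : ∀ t ∈ Finset.range n, Polynomial.eval (-(i:ℝ)) (Polynomial.X + Polynomial.C ((t:ℝ)*l))
        = -((i:ℝ) - (t:ℝ)*l) := by
      intro t _
      simp only [Polynomial.eval_add, Polynomial.eval_X, Polynomial.eval_C]
      ring
    rw [Finset.prod_congr rfl this, prodNeg, dfall, ← mul_assoc, ← mul_pow]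
    norm_num
  rw [h0, WP, Polynomial.eval_finset_sum, Finset.mul_sum]
  refine Finset.sum_congr rfl fun j hj => ?_
  have hj' : j ≤ n := Nat.lt_succ_iff.1 (Finset.mem_range.1 hj)
  rw [Polynomial.eval_mul, Polynomial.eval_C, Polynomial.eval_prod]
  have hprod : ∏ t ∈ Finset.range n,
      Polynomial.eval (-(i:ℝ)) (Polynomial.X + Polynomial.C ((n:ℝ)-1-(j:ℝ)-(t:ℝ)))
      = (-1:ℝ)^n * ((n.factorial : ℝ) * (((i+j).choose n : ℕ) : ℝ)) := by
    have hre := Finset.prod_range_reflect (fun t =>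
        Polynomial.eval (-(i:ℝ)) (Polynomial.X + Polynomial.C ((n:ℝ)-1-(j:ℝ)-(t:ℝ)))) n
    rw [← hre]
    have hcg : ∀ t ∈ Finset.range n,
        Polynomial.eval (-(i:ℝ)) (Polynomial.X + Polynomial.C ((n:ℝ)-1-(j:ℝ)-((n - 1 - t : ℕ):ℝ)))
        = -((((i+j:ℕ)):ℝ) - (t:ℝ)) := by
      intro t ht
      have ht' : t < n := Finset.mem_range.1 ht
      simp only [Polynomial.eval_add, Polynomial.eval_X, Polynomial.eval_C]
      have hc : ((n - 1 - t : ℕ) : ℝ) = (n:ℝ) - 1 - (t:ℝ) := by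
        rw [show n - 1 - t = n - (1 + t) by omega, Nat.cast_sub (by omega : 1 + t ≤ n)]
        push_cast
        ring
      rw [hc]
      push_cast
      ring
    rw [Finset.prod_congr rfl hcg, prodNeg, prodDesc (i+j) n]
  rw [hprod, ← mul_assoc, ← mul_assoc, ← mul_assoc]
  have hsgn : (-1:ℝ)^n * (degEulerianNum (-l) n j * (n.factorial:ℝ)⁻¹) * (-1:ℝ)^n
      = degEulerianNum (-l) n j * (n.factorial:ℝ)⁻¹ := by
    have h1 : (-1:ℝ)^n * (-1:ℝ)^n = 1 := by rw [← mul_pow]; norm_num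
    calc (-1:ℝ)^n * (degEulerianNum (-l) n j * (n.factorial:ℝ)⁻¹) * (-1:ℝ)^n
        = ((-1:ℝ)^n * (-1:ℝ)^n) * (degEulerianNum (-l) n j * (n.factorial:ℝ)⁻¹) := by ring
      _ = degEulerianNum (-l) n j * (n.factorial:ℝ)⁻¹ := by rw [h1, one_mul]
  rw [hsgn]
  have hnfac : (n.factorial : ℝ) ≠ 0 := Nat.cast_ne_zero.2 n.factorial_ne_zero
  field_simp

/-- if `S k = {n brace k}_λ` are the degenerate Stirling numbers of the
second kind, i.e. `(x)_{n,λ} = ∑_{k=0}^n S k (x)_k` for all `x`, then for `k ≤ n`: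
`S k = (1/k!) ∑_{j=0}^n A_{-λ}(n,j) binom(j, n-k)`. -/
theorem stmt11 (l : ℝ) (n k : ℕ) (hk : k ≤ n) (S : ℕ → ℝ)
    (hS : ∀ x : ℝ, dfall l x n = ∑ j ∈ Finset.range (n + 1), S j * dfall 1 x j) :
    S k = (1 / (k.factorial : ℝ)) *
      ∑ j ∈ Finset.range (n + 1), degEulerianNum (-l) n j * (j.choose (n - k) : ℝ) := by
  have hL : (fwdDiff (1:ℕ))^[k] (fun i : ℕ => dfall l (i:ℝ) n) 0 = (k.factorial:ℝ) * S k := by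
    have hfuneq : (fun i : ℕ => dfall l (i:ℝ) n) =
        ∑ j ∈ Finset.range (n+1), S j • (fun i : ℕ => dfall 1 (i:ℝ) j) := by
      funext i
      rw [hS (i:ℝ)]
      simp [Finset.sum_apply]
    rw [hfuneq, fwdDiff_iter_finset_sum, Finset.sum_apply]
    have hcg : ∀ j ∈ Finset.range (n+1),
        ((fwdDiff (1:ℕ))^[k] (S j • fun i : ℕ => dfall 1 (i:ℝ) j)) 0
        = if j = k then S j * (k.factorial:ℝ) else 0 := by
      intro j hj
      rw [fwdDiff_iter_const_smul]
      simp only [Pi.smul_apply, smul_eq_mul, D2 j k]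
      split <;> simp
    rw [Finset.sum_congr rfl hcg, Finset.sum_ite_eq' (Finset.range (n+1)) k
      (fun j => S j * (k.factorial:ℝ)), if_pos (Finset.mem_range.2 (by omega))]
    ring
  have hR : (fwdDiff (1:ℕ))^[k] (fun i : ℕ => dfall l (i:ℝ) n) 0
      = ∑ j ∈ Finset.range (n+1), degEulerianNum (-l) n j * ((j.choose (n-k) : ℕ) : ℝ) := by
    have hfun2 : (fun i : ℕ => dfall l (i:ℝ) n) =
        ∑ j ∈ Finset.range (n+1),
          (degEulerianNum (-l) n j) • (fun i : ℕ => (((i+j).choose n : ℕ) : ℝ)) := by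
      funext i
      rw [WN l n i]
      simp [Finset.sum_apply]
    rw [hfun2, fwdDiff_iter_finset_sum, Finset.sum_apply]
    refine Finset.sum_congr rfl fun j hj => ?_
    rw [fwdDiff_iter_const_smul, I1a k n j hk]
    simp
  have hmain : (k.factorial:ℝ) * S k
      = ∑ j ∈ Finset.range (n+1), degEulerianNum (-l) n j * ((j.choose (n-k) : ℕ) : ℝ) :=
    hL.symm.trans hR
  have hkfac : (k.factorial : ℝ) ≠ 0 := Nat.cast_ne_zero.2 k.factorial_ne_zero
  field_simp
  linarith [hmain]
end
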